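/- arXiv:2312.11353 — 2 statements merged into one kernel-verified Lean document; each statement's English description precedes it below -/
import Mathlib

section
/- Let c₁, C_B > 0 and suppose w : ℝ³ × (0,∞) → ℝ³ satisfies the pointwise integral inequality |w(x,t)| ≤ ∫₀^t ∫_{ℝ³} C_B (|x−y| + √(t−s))^{−4} · c₁² (|y| + √s)^{−2} dy ds for all (x,t). Then there is a constant C depending only on c₁ and C_B such that |w(x,t)| ≤ C √t / (|x| + √t)² for all x ∈ ℝ³, t > 0. -/
open MeasureTheory Set
open scoped ENNReal

noncomputable section

abbrev E3 := EuclideanSpace ℝ (Fin 3)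

def cInt : ℝ := ∫ z : E3, (1 + ‖z‖) ^ (-(4:ℝ))

lemma cInt_nonneg : 0 ≤ cInt :=
  integral_nonneg fun z => Real.rpow_nonneg (by positivity) _

lemma finrank_E3 : Module.finrank ℝ E3 = 3 := by simp

lemma integrable_J : Integrable (fun z : E3 => (1 + ‖z‖) ^ (-(4:ℝ))) := by
  apply integrable_one_add_norm (r := 4)
  rw [finrank_E3]; norm_num

lemma key_eq (a : ℝ) (ha : 0 < a) (z : E3) :
    (‖z‖ + a) ^ (-(4:ℝ)) = a ^ (-(4:ℝ)) * (1 + ‖a⁻¹ • z‖) ^ (-(4:ℝ)) := by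
  rw [← Real.mul_rpow ha.le (by positivity)]
  congr 1
  rw [norm_smul]
  have : ‖a⁻¹‖ = a⁻¹ := by rw [Real.norm_eq_abs, abs_of_pos (by positivity)]
  rw [this]
  field_simp
  ring

lemma integrable_base (a : ℝ) (ha : 0 < a) :
    Integrable (fun z : E3 => (‖z‖ + a) ^ (-(4:ℝ))) := by
  have : (fun z : E3 => (‖z‖ + a) ^ (-(4:ℝ)))
      = fun z : E3 => a ^ (-(4:ℝ)) * (1 + ‖a⁻¹ • z‖) ^ (-(4:ℝ)) := by
    funext z; exact key_eq a ha z
  rw [this]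
  exact (((integrable_comp_smul_iff (volume : Measure E3)
    (fun w => (1 + ‖w‖) ^ (-(4:ℝ))) (inv_ne_zero ha.ne')).2 integrable_J).const_mul _)

lemma integral_base (a : ℝ) (ha : 0 < a) :
    ∫ z : E3, (‖z‖ + a) ^ (-(4:ℝ)) = cInt / a := by
  simp_rw [key_eq a ha]
  rw [integral_const_mul, Measure.integral_comp_inv_smul_of_nonneg (volume : Measure E3)
    (fun w => (1 + ‖w‖) ^ (-(4:ℝ))) ha.le, finrank_E3]
  rw [smul_eq_mul, ← cInt]
  rw [Real.rpow_neg ha.le]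
  have h4 : a ^ (4:ℝ) = a ^ (4:ℕ) := by
    rw [show (4:ℝ) = ((4:ℕ):ℝ) by norm_num, Real.rpow_natCast]
  rw [h4]
  field_simp

lemma integrable_shift (x : E3) (a : ℝ) (ha : 0 < a) :
    Integrable (fun y : E3 => (‖x - y‖ + a) ^ (-(4:ℝ))) :=
  (integrable_comp_sub_left (fun z : E3 => (‖z‖ + a) ^ (-(4:ℝ))) x).2 (integrable_base a ha)

lemma integral_shift (x : E3) (a : ℝ) (ha : 0 < a) :
    ∫ y : E3, (‖x - y‖ + a) ^ (-(4:ℝ)) = cInt / a := by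
  rw [integral_sub_left_eq_self (fun z : E3 => (‖z‖ + a) ^ (-(4:ℝ))) volume x]
  exact integral_base a ha

lemma ptwise (u v M w w' : ℝ) (hu : 0 < u) (hv : 0 < v) (hM : 0 < M)
    (hw : 0 < w) (hw' : 0 < w') (hww : w * w' = 1)
    (hcase : u ≤ 2 / M ∨ v ≤ 2 / M) :
    u ^ 4 * v ^ 2 ≤ 4 / M ^ 2 * ((w / 2 + 1) * u ^ 4 + w' / 2 * v ^ 4) := by
  rw [div_mul_eq_mul_div, le_div_iff₀ (by positivity)]
  rcases hcase with h | h
  · have h' : u * M ≤ 2 := (le_div_iff₀ hM).1 h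
    have h2 : 2 * (u ^ 2 * v ^ 2) ≤ w * u ^ 4 + w' * v ^ 4 := by
      have hexp : w' * (w * u ^ 2 - v ^ 2) ^ 2
          = (w * w') * (w * u ^ 4) - 2 * ((w * w') * (u ^ 2 * v ^ 2)) + w' * v ^ 4 := by ring
      rw [hww, one_mul, one_mul] at hexp
      nlinarith [mul_nonneg hw'.le (sq_nonneg (w * u ^ 2 - v ^ 2))]
    have h3 : (u * M) ^ 2 ≤ 4 := by nlinarith [mul_pos hu hM]
    have h4 : (u * M) ^ 2 * (u ^ 2 * v ^ 2) ≤ 4 * (u ^ 2 * v ^ 2) :=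
      mul_le_mul_of_nonneg_right h3 (by positivity)
    nlinarith [pow_nonneg hu.le 4]
  · have h' : v * M ≤ 2 := (le_div_iff₀ hM).1 h
    have h3 : (v * M) ^ 2 ≤ 4 := by nlinarith [mul_pos hv hM]
    have h4 : u ^ 4 * (v * M) ^ 2 ≤ u ^ 4 * 4 :=
      mul_le_mul_of_nonneg_left h3 (pow_nonneg hu.le 4)
    nlinarith [mul_nonneg hw.le (pow_nonneg hu.le 4), mul_nonneg hw'.le (pow_nonneg hv.le 4)]

lemma rpow_neg4_eq (P : ℝ) (hP : 0 < P) : P ^ (-(4:ℝ)) = (P⁻¹) ^ (4:ℕ) := by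
  rw [Real.rpow_neg hP.le, show (4:ℝ) = ((4:ℕ):ℝ) by norm_num, Real.rpow_natCast, inv_pow]

lemma rpow_neg2_eq (P : ℝ) (hP : 0 < P) : P ^ (-(2:ℝ)) = (P⁻¹) ^ (2:ℕ) := by
  rw [Real.rpow_neg hP.le, show (2:ℝ) = ((2:ℕ):ℝ) by norm_num, Real.rpow_natCast, inv_pow]

lemma inner_est (c₁ C_B : ℝ) (hc₁ : 0 < c₁) (hCB : 0 < C_B) (x : E3) (a b : ℝ)
    (ha : 0 < a) (hb : 0 < b) :
    ∫ y : E3, C_B * (‖x - y‖ + a) ^ (-(4:ℝ)) * (c₁ ^ 2 * (‖y‖ + b) ^ (-(2:ℝ)))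
      ≤ C_B * c₁ ^ 2 * (4 / (‖x‖ + a + b) ^ 2) *
        (cInt * ((Real.sqrt (b / a) / 2 + 1) / a + Real.sqrt (a / b) / 2 / b)) := by
  set M : ℝ := ‖x‖ + a + b with hM_def
  have hM : 0 < M := by positivity
  set w : ℝ := Real.sqrt (b / a) with hw_def
  set w' : ℝ := Real.sqrt (a / b) with hw'_def
  have hw : 0 < w := Real.sqrt_pos.2 (by positivity)
  have hw' : 0 < w' := Real.sqrt_pos.2 (by positivity)
  have hww : w * w' = 1 := by
    rw [hw_def, hw'_def, ← Real.sqrt_mul (by positivity)]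
    rw [show b / a * (a / b) = 1 by field_simp]
    exact Real.sqrt_one
  set φ : E3 → ℝ := fun y =>
    C_B * c₁ ^ 2 * (4 / M ^ 2) *
      ((w / 2 + 1) * (‖x - y‖ + a) ^ (-(4:ℝ)) + w' / 2 * (‖y‖ + b) ^ (-(4:ℝ))) with hφ_def
  have hφint : Integrable φ :=
    ((((integrable_shift x a ha).const_mul _).add
      ((integrable_base b hb).const_mul _)).const_mul _)
  have hpt : ∀ y : E3,
      C_B * (‖x - y‖ + a) ^ (-(4:ℝ)) * (c₁ ^ 2 * (‖y‖ + b) ^ (-(2:ℝ))) ≤ φ y := by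
    intro y
    have hP : 0 < ‖x - y‖ + a := by positivity
    have hQ : 0 < ‖y‖ + b := by positivity
    set u : ℝ := (‖x - y‖ + a)⁻¹ with hu_def
    set v : ℝ := (‖y‖ + b)⁻¹ with hv_def
    have hu : 0 < u := by positivity
    have hv : 0 < v := by positivity
    have htri : M ≤ (‖x - y‖ + a) + (‖y‖ + b) := by
      have : ‖x‖ ≤ ‖x - y‖ + ‖y‖ := by
        simpa using norm_add_le (x - y) y
      rw [hM_def]; linarith
    have hcase : u ≤ 2 / M ∨ v ≤ 2 / M := by
      rcases le_total (‖x - y‖ + a) (‖y‖ + b) with h | h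
      · right
        have h2 : M / 2 ≤ ‖y‖ + b := by linarith
        rw [hv_def]
        calc (‖y‖ + b)⁻¹ ≤ (M / 2)⁻¹ := by
              apply inv_anti₀ (by positivity) h2
          _ = 2 / M := by rw [inv_div]
      · left
        have h2 : M / 2 ≤ ‖x - y‖ + a := by linarith
        rw [hu_def]
        calc (‖x - y‖ + a)⁻¹ ≤ (M / 2)⁻¹ := by
              apply inv_anti₀ (by positivity) h2
          _ = 2 / M := by rw [inv_div]
    have key := ptwise u v M w w' hu hv hM hw hw' hww hcase
    rw [hφ_def]
    simp only
    rw [rpow_neg4_eq _ hP, rpow_neg2_eq _ hQ, rpow_neg4_eq _ hQ, ← hu_def, ← hv_def]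
    calc C_B * u ^ 4 * (c₁ ^ 2 * v ^ 2) = (C_B * c₁ ^ 2) * (u ^ 4 * v ^ 2) := by ring
      _ ≤ (C_B * c₁ ^ 2) * (4 / M ^ 2 * ((w / 2 + 1) * u ^ 4 + w' / 2 * v ^ 4)) := by
          apply mul_le_mul_of_nonneg_left key (by positivity)
      _ = C_B * c₁ ^ 2 * (4 / M ^ 2) * ((w / 2 + 1) * u ^ 4 + w' / 2 * v ^ 4) := by ring
  have hmono := integral_mono_of_nonneg
    (f := fun y : E3 => C_B * (‖x - y‖ + a) ^ (-(4:ℝ)) * (c₁ ^ 2 * (‖y‖ + b) ^ (-(2:ℝ))))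
    (g := φ) (μ := volume)
    (Filter.Eventually.of_forall fun y => by positivity)
    hφint (Filter.Eventually.of_forall hpt)
  refine hmono.trans_eq ?_
  rw [hφ_def]
  simp only
  rw [integral_const_mul, integral_add ((integrable_shift x a ha).const_mul _)
    ((integrable_base b hb).const_mul _), integral_const_mul, integral_const_mul,
    integral_shift x a ha, integral_base b hb]
  ring

lemma integrableOn_rpow_Ioo (t r : ℝ) (ht : 0 < t) (hr : -1 < r) :
    IntegrableOn (fun s : ℝ => s ^ r) (Ioo 0 t) := by
  have h := intervalIntegral.intervalIntegrable_rpow' (a := 0) (b := t) hr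
  rw [intervalIntegrable_iff_integrableOn_Ioc_of_le ht.le] at h
  exact h.mono_set Ioo_subset_Ioc_self

lemma integrableOn_rpow_Ioo' (t r : ℝ) (ht : 0 < t) (hr : -1 < r) :
    IntegrableOn (fun s : ℝ => (t - s) ^ r) (Ioo 0 t) := by
  have h := (intervalIntegral.intervalIntegrable_rpow' (a := 0) (b := t) hr).comp_sub_left t
  simp only [sub_zero, sub_self] at h
  replace h := h.symm
  rw [intervalIntegrable_iff_integrableOn_Ioc_of_le ht.le] at h
  exact h.mono_set Ioo_subset_Ioc_self

lemma integral_rpow_Ioo (t r : ℝ) (ht : 0 < t) (hr : -1 < r) :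
    ∫ s in Ioo (0:ℝ) t, s ^ r = t ^ (r + 1) / (r + 1) := by
  rw [← integral_Ioc_eq_integral_Ioo, ← intervalIntegral.integral_of_le ht.le,
    integral_rpow (Or.inl hr), Real.zero_rpow (by linarith)]
  ring

lemma integral_rpow_Ioo' (t r : ℝ) (ht : 0 < t) (hr : -1 < r) :
    ∫ s in Ioo (0:ℝ) t, (t - s) ^ r = t ^ (r + 1) / (r + 1) := by
  rw [← integral_Ioc_eq_integral_Ioo, ← intervalIntegral.integral_of_le ht.le,
    intervalIntegral.integral_comp_sub_left (fun u : ℝ => u ^ r) t]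
  simp only [sub_zero, sub_self]
  rw [integral_rpow (Or.inl hr), Real.zero_rpow (by linarith)]
  ring

lemma q4 (x : ℝ) (hx : 0 ≤ x) : Real.sqrt (Real.sqrt x) = x ^ ((1:ℝ)/4) := by
  rw [Real.sqrt_eq_rpow, Real.sqrt_eq_rpow, ← Real.rpow_mul hx]
  norm_num

lemma e_div (p q : ℝ) (hp : 0 < p) (hq : 0 < q) :
    Real.sqrt (Real.sqrt p / Real.sqrt q) / Real.sqrt q
      = p ^ ((1:ℝ)/4) * q ^ (-(3/4) : ℝ) := by
  rw [Real.sqrt_div (Real.sqrt_nonneg p), q4 p hp.le, q4 q hq.le, Real.sqrt_eq_rpow,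
    div_div, ← Real.rpow_add hq, div_eq_mul_inv, ← Real.rpow_neg hq.le]
  norm_num

lemma e_inv (q : ℝ) (hq : 0 < q) : 1 / Real.sqrt q = q ^ (-(1/2) : ℝ) := by
  rw [Real.sqrt_eq_rpow, one_div, ← Real.rpow_neg hq.le]

/-- First bootstrap step for the upper bound on the error: if
`|w(x,t)| ≤ ∫₀ᵗ∫ C_B (|x−y|+√(t−s))⁻⁴ c₁² (|y|+√s)⁻² dy ds` for all `(x,t)`, then
`|w(x,t)| ≤ C √t/(|x|+√t)²` with `C = C(c₁, C_B)`. -/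
theorem error_first_bootstrap (c₁ C_B : ℝ) (hc₁ : 0 < c₁) (hCB : 0 < C_B) :
    ∃ C : ℝ, 0 < C ∧
      ∀ w : E3 → ℝ → E3,
        (∀ (x : E3) (t : ℝ), 0 < t →
          ‖w x t‖ ≤ ∫ s in Set.Ioo (0 : ℝ) t, ∫ y : E3,
            C_B * (‖x - y‖ + Real.sqrt (t - s)) ^ (-(4 : ℝ)) *
              (c₁ ^ 2 * (‖y‖ + Real.sqrt s) ^ (-(2 : ℝ)))) →
        ∀ (x : E3) (t : ℝ), 0 < t →
          ‖w x t‖ ≤ C * Real.sqrt t / (‖x‖ + Real.sqrt t) ^ 2 := by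
  refine ⟨40 * C_B * c₁ ^ 2 * cInt + 1, ?_, ?_⟩
  · have h1 : 0 ≤ 40 * C_B * c₁ ^ 2 * cInt :=
      mul_nonneg (by positivity) cInt_nonneg
    linarith
  intro w hw x t ht
  have hst : 0 < Real.sqrt t := Real.sqrt_pos.2 ht
  set N : ℝ := ‖x‖ + Real.sqrt t with hN_def
  have hN : 0 < N := by positivity
  set K0 : ℝ := C_B * c₁ ^ 2 * (4 / N ^ 2) * cInt with hK0_def
  have hK0 : 0 ≤ K0 := by
    have := cInt_nonneg
    rw [hK0_def]
    positivity
  set h : ℝ → ℝ := fun s => K0 * (t ^ ((1:ℝ)/4) * (t - s) ^ (-(3/4) : ℝ)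
      + t ^ ((1:ℝ)/4) * s ^ (-(3/4) : ℝ) + (t - s) ^ (-(1/2) : ℝ)) with hh_def
  -- pointwise bound on the inner integral
  have step1 : ∀ s ∈ Ioo (0:ℝ) t,
      (∫ y : E3, C_B * (‖x - y‖ + Real.sqrt (t - s)) ^ (-(4 : ℝ)) *
          (c₁ ^ 2 * (‖y‖ + Real.sqrt s) ^ (-(2 : ℝ)))) ≤ h s := by
    intro s hs
    obtain ⟨hs0, hst'⟩ := hs
    have hts : 0 < t - s := by linarith
    have ha : 0 < Real.sqrt (t - s) := Real.sqrt_pos.2 hts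
    have hb : 0 < Real.sqrt s := Real.sqrt_pos.2 hs0
    refine (inner_est c₁ C_B hc₁ hCB x _ _ ha hb).trans ?_
    -- now a pure real-number estimate
    set a : ℝ := Real.sqrt (t - s)
    set b : ℝ := Real.sqrt s
    have hNM : N ≤ ‖x‖ + a + b := by
      have : Real.sqrt t ≤ a + b := by
        have h1 : t ≤ (a + b) ^ 2 := by
          have hab : Real.sqrt (t - s) * Real.sqrt s ≥ 0 := by positivity
          have e1 : a ^ 2 = t - s := Real.sq_sqrt hts.le
          have e2 : b ^ 2 = s := Real.sq_sqrt hs0.le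
          nlinarith
        calc Real.sqrt t ≤ Real.sqrt ((a + b) ^ 2) := Real.sqrt_le_sqrt h1
          _ = a + b := Real.sqrt_sq (by positivity)
      rw [hN_def]
      linarith
    have hbr : (Real.sqrt (b / a) / 2 + 1) / a + Real.sqrt (a / b) / 2 / b
        ≤ t ^ ((1:ℝ)/4) * (t - s) ^ (-(3/4) : ℝ) + t ^ ((1:ℝ)/4) * s ^ (-(3/4) : ℝ)
          + (t - s) ^ (-(1/2) : ℝ) := by
      have ea : Real.sqrt (b / a) / a = s ^ ((1:ℝ)/4) * (t - s) ^ (-(3/4) : ℝ) :=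
        e_div s (t - s) hs0 hts
      have eb : Real.sqrt (a / b) / b = (t - s) ^ ((1:ℝ)/4) * s ^ (-(3/4) : ℝ) :=
        e_div (t - s) s hts hs0
      have ec : 1 / a = (t - s) ^ (-(1/2) : ℝ) := e_inv (t - s) hts
      have hsplit : (Real.sqrt (b / a) / 2 + 1) / a + Real.sqrt (a / b) / 2 / b
          = (Real.sqrt (b / a) / a) / 2 + 1 / a + (Real.sqrt (a / b) / b) / 2 := by
        ring
      rw [hsplit, ea, eb, ec]
      have m1 : s ^ ((1:ℝ)/4) ≤ t ^ ((1:ℝ)/4) :=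
        Real.rpow_le_rpow hs0.le (by linarith) (by norm_num)
      have m2 : (t - s) ^ ((1:ℝ)/4) ≤ t ^ ((1:ℝ)/4) :=
        Real.rpow_le_rpow hts.le (by linarith) (by norm_num)
      have p1 : (0:ℝ) ≤ (t - s) ^ (-(3/4) : ℝ) := Real.rpow_nonneg hts.le _
      have p2 : (0:ℝ) ≤ s ^ (-(3/4) : ℝ) := Real.rpow_nonneg hs0.le _
      have p3 : (0:ℝ) ≤ s ^ ((1:ℝ)/4) := Real.rpow_nonneg hs0.le _
      have p4 : (0:ℝ) ≤ (t - s) ^ ((1:ℝ)/4) := Real.rpow_nonneg hts.le _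
      have q1 : s ^ ((1:ℝ)/4) * (t - s) ^ (-(3/4) : ℝ)
          ≤ t ^ ((1:ℝ)/4) * (t - s) ^ (-(3/4) : ℝ) := mul_le_mul_of_nonneg_right m1 p1
      have q2 : (t - s) ^ ((1:ℝ)/4) * s ^ (-(3/4) : ℝ)
          ≤ t ^ ((1:ℝ)/4) * s ^ (-(3/4) : ℝ) := mul_le_mul_of_nonneg_right m2 p2
      nlinarith [mul_nonneg p3 p1, mul_nonneg p4 p2]
    set BR : ℝ := (Real.sqrt (b / a) / 2 + 1) / a + Real.sqrt (a / b) / 2 / b with hBR_def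
    set T : ℝ := t ^ ((1:ℝ)/4) * (t - s) ^ (-(3/4) : ℝ) + t ^ ((1:ℝ)/4) * s ^ (-(3/4) : ℝ)
      + (t - s) ^ (-(1/2) : ℝ) with hT_def
    have hBRnn : 0 ≤ BR := by
      rw [hBR_def]
      have h1 : 0 ≤ Real.sqrt (b / a) := Real.sqrt_nonneg _
      have h2 : 0 ≤ Real.sqrt (a / b) := Real.sqrt_nonneg _
      positivity
    have hM2 : N ^ 2 ≤ (‖x‖ + a + b) ^ 2 := pow_le_pow_left₀ hN.le hNM 2
    have hdiv : 4 / (‖x‖ + a + b) ^ 2 ≤ 4 / N ^ 2 :=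
      div_le_div_of_nonneg_left (by norm_num) (by positivity) hM2
    have hc2 : cInt * BR ≤ cInt * T := mul_le_mul_of_nonneg_left hbr cInt_nonneg
    have hmain : 4 / (‖x‖ + a + b) ^ 2 * (cInt * BR) ≤ 4 / N ^ 2 * (cInt * T) :=
      mul_le_mul hdiv hc2 (mul_nonneg cInt_nonneg hBRnn) (by positivity)
    calc C_B * c₁ ^ 2 * (4 / (‖x‖ + a + b) ^ 2) * (cInt * BR)
        = C_B * c₁ ^ 2 * (4 / (‖x‖ + a + b) ^ 2 * (cInt * BR)) := by ring
      _ ≤ C_B * c₁ ^ 2 * (4 / N ^ 2 * (cInt * T)) :=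
          mul_le_mul_of_nonneg_left hmain (by positivity)
      _ = h s := by rw [hh_def, hK0_def, hT_def]; ring
  -- integrability of the majorant
  have i1 : IntegrableOn (fun s : ℝ => (t - s) ^ (-(3/4) : ℝ)) (Ioo 0 t) :=
    integrableOn_rpow_Ioo' t _ ht (by norm_num)
  have i2 : IntegrableOn (fun s : ℝ => s ^ (-(3/4) : ℝ)) (Ioo 0 t) :=
    integrableOn_rpow_Ioo t _ ht (by norm_num)
  have i3 : IntegrableOn (fun s : ℝ => (t - s) ^ (-(1/2) : ℝ)) (Ioo 0 t) :=
    integrableOn_rpow_Ioo' t _ ht (by norm_num)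
  have hInt : IntegrableOn h (Ioo 0 t) := by
    rw [hh_def]
    exact (((i1.const_mul _).add (i2.const_mul _)).add i3).const_mul _
  have mono := integral_mono_of_nonneg (μ := volume.restrict (Ioo 0 t))
    (f := fun s => ∫ y : E3, C_B * (‖x - y‖ + Real.sqrt (t - s)) ^ (-(4 : ℝ)) *
        (c₁ ^ 2 * (‖y‖ + Real.sqrt s) ^ (-(2 : ℝ))))
    (g := h)
    (Filter.Eventually.of_forall fun s => integral_nonneg fun y => by positivity)
    hInt
    ((ae_restrict_iff' measurableSet_Ioo).2 (Filter.Eventually.of_forall step1))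
  refine (hw x t ht).trans (mono.trans ?_)
  -- compute the integral of the majorant
  have v1 : ∫ s in Ioo (0:ℝ) t, (t - s) ^ (-(3/4) : ℝ) = 4 * t ^ ((1:ℝ)/4) := by
    rw [integral_rpow_Ioo' t _ ht (by norm_num)]
    rw [show (-(3/4) + 1 : ℝ) = 1/4 by norm_num]
    ring
  have v2 : ∫ s in Ioo (0:ℝ) t, s ^ (-(3/4) : ℝ) = 4 * t ^ ((1:ℝ)/4) := by
    rw [integral_rpow_Ioo t _ ht (by norm_num)]
    rw [show (-(3/4) + 1 : ℝ) = 1/4 by norm_num]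
    ring
  have v3 : ∫ s in Ioo (0:ℝ) t, (t - s) ^ (-(1/2) : ℝ) = 2 * Real.sqrt t := by
    rw [integral_rpow_Ioo' t _ ht (by norm_num)]
    rw [show (-(1/2) + 1 : ℝ) = 1/2 by norm_num, Real.sqrt_eq_rpow]
    ring
  have vh : ∫ s in Ioo (0:ℝ) t, h s
      = K0 * (t ^ ((1:ℝ)/4) * (4 * t ^ ((1:ℝ)/4)) + t ^ ((1:ℝ)/4) * (4 * t ^ ((1:ℝ)/4))
        + 2 * Real.sqrt t) := by
    have j1 : IntegrableOn (fun s : ℝ => t ^ ((1:ℝ)/4) * (t - s) ^ (-(3/4) : ℝ)) (Ioo 0 t) :=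
      i1.const_mul _
    have j2 : IntegrableOn (fun s : ℝ => t ^ ((1:ℝ)/4) * s ^ (-(3/4) : ℝ)) (Ioo 0 t) :=
      i2.const_mul _
    have j12 : IntegrableOn (fun s : ℝ => t ^ ((1:ℝ)/4) * (t - s) ^ (-(3/4) : ℝ)
        + t ^ ((1:ℝ)/4) * s ^ (-(3/4) : ℝ)) (Ioo 0 t) := j1.add j2
    rw [hh_def]
    rw [integral_const_mul, integral_add j12 i3, integral_add j1 j2,
      integral_const_mul, integral_const_mul, v1, v2, v3]
  rw [vh]
  have e14 : t ^ ((1:ℝ)/4) * t ^ ((1:ℝ)/4) = Real.sqrt t := by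
    rw [← Real.rpow_add ht, Real.sqrt_eq_rpow]
    norm_num
  have efin : K0 * (t ^ ((1:ℝ)/4) * (4 * t ^ ((1:ℝ)/4)) + t ^ ((1:ℝ)/4) * (4 * t ^ ((1:ℝ)/4))
        + 2 * Real.sqrt t) = (40 * C_B * c₁ ^ 2 * cInt) * Real.sqrt t / N ^ 2 := by
    rw [hK0_def]
    have : t ^ ((1:ℝ)/4) * (4 * t ^ ((1:ℝ)/4)) = 4 * Real.sqrt t := by
      rw [← e14]; ring
    rw [this]
    field_simp
    ring
  rw [efin]
  have hpos : 0 < Real.sqrt t / N ^ 2 := by positivity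
  rw [div_le_div_iff₀ (by positivity) (by positivity)]
  nlinarith [mul_pos hst (mul_pos (pow_pos hN 2) (pow_pos hN 2)), cInt_nonneg,
    mul_nonneg (mul_nonneg (mul_nonneg (by positivity : (0:ℝ) ≤ 40 * C_B * c₁ ^ 2) cInt_nonneg) hst.le) (sq_nonneg N)]
end
end

section
/- Let c₁ > 0, 3 < p < ∞, and C_B > 0. Suppose nonnegative functions f, g : (0,T) → [0,∞) satisfy g(t) = t^{(p−3)/(2p)} f(t), sup_{0<t<T} g(t) < ∞, and f(t) ≤ C_B (1 + c₁) ε ∫₀^t (t−s)^{−1/2} s^{−1/2 − (p−3)/(2p)} g(s)·s^{(p−3)/(2p)}·s^{−(p−3)/(2p)} ds, i.e. f(t) ≤ C_B(1+c₁)ε (sup_{0<s<t} g(s)) ∫₀^t (t−s)^{−1/2} s^{−1/2−(p−3)/(2p)} ds. If ε ≤ 1/(2 C_B (1+c₁) B(1/2, 3/(2p))) where B is the Beta function, then g ≡ 0 on (0,T), hence f ≡ 0. -/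
open MeasureTheory Set
open scoped ENNReal

noncomputable section

/-- The Euler Beta function `B(α,β) = Γ(α)Γ(β)/Γ(α+β)`. -/
def realBeta (α β : ℝ) : ℝ := Real.Gamma α * Real.Gamma β / Real.Gamma (α + β)

lemma beta_conv {a b t : ℝ} (ha : 0 < a) (hb : 0 < b) (ht : 0 < t) :
    (∫ s in (0:ℝ)..t, (t - s) ^ (a - 1) * s ^ (b - 1)) = t ^ (a + b - 1) * realBeta a b := by
  have hb' : 0 < ((b:ℂ)).re := by simpa using hb
  have ha' : 0 < ((a:ℂ)).re := by simpa using ha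
  have hG : Complex.Gamma ((b:ℂ) + (a:ℂ)) ≠ 0 := by
    apply Complex.Gamma_ne_zero_of_re_pos
    simpa using by positivity
  have hBeta := Complex.Gamma_mul_Gamma_eq_betaIntegral hb' ha'
  have hscale := Complex.betaIntegral_scaled (b:ℂ) (a:ℂ) ht
  have key : ((∫ s in (0:ℝ)..t, (t - s) ^ (a - 1) * s ^ (b - 1) : ℝ) : ℂ)
      = ∫ x in (0:ℝ)..t, (x:ℂ) ^ ((b:ℂ) - 1) * ((t:ℂ) - (x:ℂ)) ^ ((a:ℂ) - 1) := by
    rw [← intervalIntegral.integral_ofReal]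
    apply intervalIntegral.integral_congr
    intro x hx
    rw [uIcc_of_le ht.le] at hx
    dsimp only
    rw [Complex.ofReal_mul, Complex.ofReal_cpow (sub_nonneg.mpr hx.2),
      Complex.ofReal_cpow hx.1]
    push_cast
    ring
  have hBval : Complex.betaIntegral (b:ℂ) (a:ℂ)
      = Complex.Gamma (b:ℂ) * Complex.Gamma (a:ℂ) / Complex.Gamma ((b:ℂ) + (a:ℂ)) := by
    field_simp
    linear_combination -hBeta
  apply Complex.ofReal_injective
  rw [key, hscale, hBval]
  rw [Complex.ofReal_mul, Complex.ofReal_cpow ht.le]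
  rw [realBeta]
  push_cast [Complex.Gamma_ofReal]
  rw [show Complex.Gamma ((b:ℂ) + (a:ℂ)) = ((Real.Gamma (a+b) : ℝ) : ℂ) by
    rw [← Complex.ofReal_add, add_comm b a, Complex.Gamma_ofReal]]
  ring

/-- The absorption argument behind the uniqueness criterion: if
`g(t) = t^{(p−3)/(2p)} f(t)` is bounded, `f` satisfies the convolution inequality with
prefactor `C_B(1+c₁)ε`, and `ε ≤ 1/(2 C_B (1+c₁) B(1/2, 3/(2p)))`, then `g ≡ 0`
and hence `f ≡ 0` on `(0,T)`. -/
theorem absorption_uniqueness (c₁ C_B ε p T : ℝ)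
    (hc₁ : 0 < c₁) (hCB : 0 < C_B) (hε : 0 ≤ ε) (hp : 3 < p) (hT : 0 < T)
    (f g : ℝ → ℝ)
    (hf0 : ∀ t ∈ Ioo (0 : ℝ) T, 0 ≤ f t)
    (hg0 : ∀ t ∈ Ioo (0 : ℝ) T, 0 ≤ g t)
    (hfg : ∀ t ∈ Ioo (0 : ℝ) T, g t = t ^ ((p - 3) / (2 * p)) * f t)
    (hbdd : BddAbove (g '' Ioo (0 : ℝ) T))
    (hmain : ∀ t ∈ Ioo (0 : ℝ) T,
      f t ≤ C_B * (1 + c₁) * ε * sSup (g '' Ioo (0 : ℝ) t) *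
        ∫ s in (0 : ℝ)..t, (t - s) ^ (-(1 : ℝ) / 2) * s ^ (-(1 : ℝ) / 2 - (p - 3) / (2 * p)))
    (hεsmall : ε ≤ 1 / (2 * C_B * (1 + c₁) * realBeta (1 / 2) (3 / (2 * p)))) :
    ∀ t ∈ Ioo (0 : ℝ) T, g t = 0 ∧ f t = 0 := by
  have hp0 : 0 < p := by linarith
  set γ : ℝ := (p - 3) / (2 * p) with hγ
  have hβ : (0:ℝ) < 3 / (2 * p) := by positivity
  have hBpos : 0 < realBeta (1/2) (3/(2*p)) := by
    unfold realBeta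
    have h1 := Real.Gamma_pos_of_pos (show (0:ℝ) < 1/2 by norm_num)
    have h2 := Real.Gamma_pos_of_pos hβ
    have h3 := Real.Gamma_pos_of_pos (show (0:ℝ) < 1/2 + 3/(2*p) by positivity)
    positivity
  set B := realBeta (1/2) (3/(2*p)) with hB
  set S := sSup (g '' Ioo (0 : ℝ) T) with hS
  have hne : (g '' Ioo (0 : ℝ) T).Nonempty := ⟨g (T/2), ⟨T/2, ⟨by linarith, by linarith⟩, rfl⟩⟩
  have hS0 : 0 ≤ S := le_trans (hg0 (T/2) ⟨by linarith, by linarith⟩)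
    (le_csSup hbdd ⟨T/2, ⟨by linarith, by linarith⟩, rfl⟩)
  -- the small-ε bound
  have hCε : C_B * (1 + c₁) * ε * B ≤ 1/2 := by
    have h2 : 0 < 2 * C_B * (1 + c₁) * B := by positivity
    rw [le_div_iff₀ h2] at hεsmall
    nlinarith
  -- key pointwise bound
  have hkey : ∀ t ∈ Ioo (0 : ℝ) T, g t ≤ (1/2) * S := by
    intro t ht
    obtain ⟨ht0, htT⟩ := ht
    have hint : (∫ s in (0 : ℝ)..t, (t - s) ^ (-(1 : ℝ) / 2) * s ^ (-(1 : ℝ) / 2 - γ))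
        = t ^ (1/2 + 3/(2*p) - 1) * B := by
      have := beta_conv (a := 1/2) (b := 3/(2*p)) (by norm_num) hβ ht0
      rw [← this]
      apply intervalIntegral.integral_congr
      intro x hx
      have h1 : -(1:ℝ)/2 = 1/2 - 1 := by norm_num
      have h2 : -(1:ℝ)/2 - γ = 3/(2*p) - 1 := by
        rw [hγ]; field_simp; ring
      dsimp only
      rw [h2, h1]
    have hSt0 : 0 ≤ sSup (g '' Ioo (0 : ℝ) t) := le_trans
      (hg0 (t/2) ⟨by linarith, by linarith⟩)
      (le_csSup (hbdd.mono (image_mono (f := g) (Ioo_subset_Ioo le_rfl htT.le)))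
        ⟨t/2, ⟨by linarith, by linarith⟩, rfl⟩)
    have hStS : sSup (g '' Ioo (0 : ℝ) t) ≤ S :=
      csSup_le_csSup hbdd ⟨g (t/2), ⟨t/2, ⟨by linarith, by linarith⟩, rfl⟩⟩
        (image_mono (f := g) (Ioo_subset_Ioo le_rfl htT.le))
    have hexp : t ^ γ * t ^ (1/2 + 3/(2*p) - 1) = 1 := by
      rw [← Real.rpow_add ht0]
      have : γ + (1/2 + 3/(2*p) - 1) = 0 := by rw [hγ]; field_simp; ring
      rw [this, Real.rpow_zero]
    have htγ : 0 < t ^ γ := Real.rpow_pos_of_pos ht0 γ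
    calc g t = t ^ γ * f t := hfg t ⟨ht0, htT⟩
      _ ≤ t ^ γ * (C_B * (1 + c₁) * ε * sSup (g '' Ioo (0 : ℝ) t) *
            (t ^ (1/2 + 3/(2*p) - 1) * B)) := by
          rw [← hint]
          exact mul_le_mul_of_nonneg_left (hmain t ⟨ht0, htT⟩) htγ.le
      _ = (C_B * (1 + c₁) * ε * B) * sSup (g '' Ioo (0 : ℝ) t) *
            (t ^ γ * t ^ (1/2 + 3/(2*p) - 1)) := by ring
      _ = (C_B * (1 + c₁) * ε * B) * sSup (g '' Ioo (0 : ℝ) t) := by rw [hexp, mul_one]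
      _ ≤ (1/2) * S := by
          apply mul_le_mul hCε hStS hSt0 (by norm_num)
  have hSle : S ≤ (1/2) * S := by
    apply csSup_le hne
    rintro x ⟨t, ht, rfl⟩
    exact hkey t ht
  have hSz : S = 0 := by linarith
  intro t ht
  have hg : g t = 0 := le_antisymm
    (by
      have := le_csSup hbdd ⟨t, ht, rfl⟩
      linarith [this, hSz ▸ this])
    (hg0 t ht)
  refine ⟨hg, ?_⟩
  have := hfg t ht
  rw [hg] at this
  have htγ : 0 < t ^ ((p - 3) / (2 * p)) := Real.rpow_pos_of_pos ht.1 _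
  have := this.symm
  rcases mul_eq_zero.mp this with h | h
  · exact absurd h htγ.ne'
  · exact h
end
end
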